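/- arXiv:2308.13167 — 2 statements merged into one kernel-verified Lean document; each statement's English description precedes it below -/
import Mathlib

section
/- Let q = 2 and k ∈ ℕ. There is a constant a_{2,k} > 0 such that the number of k-element subsets of [-N, N] ∩ ℤ that contain a square modulo all but finitely many primes is at most a_{2,k} · N^{k − 1/2}. Consequently, the additive subset density of such k-element subsets is zero: their count divided by C(2N+1, k) tends to 0 as N → ∞. -/
open Finset Submodule ZMod

/-- The "square class vector" of an integer: sign bit and exponents mod 2. -/
noncomputable def sqVec (b : ℤ) : ZMod 2 × (ℕ → ZMod 2) :=
  (if b < 0 then 1 else 0, fun q => (b.natAbs.factorization q : ZMod 2))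

lemma sqVec_mul {b c : ℤ} (hb : b ≠ 0) (hc : c ≠ 0) :
    sqVec (b * c) = sqVec b + sqVec c := by
  have hb' : b.natAbs ≠ 0 := Int.natAbs_ne_zero.2 hb
  have hc' : c.natAbs ≠ 0 := Int.natAbs_ne_zero.2 hc
  unfold sqVec
  refine Prod.ext ?_ ?_
  · simp only [Prod.fst_add]
    rcases lt_or_gt_of_ne hb with h1 | h1 <;> rcases lt_or_gt_of_ne hc with h2 | h2
    · rw [if_neg (not_lt.2 (mul_pos_of_neg_of_neg h1 h2).le), if_pos h1, if_pos h2]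
      decide
    · rw [if_pos (mul_neg_of_neg_of_pos h1 h2), if_pos h1, if_neg (not_lt.2 h2.le)]
      decide
    · rw [if_pos (mul_neg_of_pos_of_neg h1 h2), if_neg (not_lt.2 h1.le), if_pos h2]
      decide
    · rw [if_neg (not_lt.2 (mul_pos h1 h2).le), if_neg (not_lt.2 h1.le),
        if_neg (not_lt.2 h2.le)]
      decide
  · simp only [Prod.snd_add]
    funext q
    rw [Int.natAbs_mul, Nat.factorization_mul hb' hc']
    simp

lemma sqVec_eq_zero_iff {b : ℤ} (hb : b ≠ 0) : sqVec b = 0 ↔ IsSquare b := by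
  constructor
  · intro h
    have h1 := congrArg Prod.fst h
    have h2 := congrArg Prod.snd h
    simp only [sqVec, Prod.fst_zero, Prod.snd_zero] at h1 h2
    have hbpos : 0 ≤ b := by
      by_contra hneg
      rw [if_pos (not_le.1 hneg)] at h1
      exact one_ne_zero h1
    have hn0 : b.natAbs ≠ 0 := Int.natAbs_ne_zero.2 hb
    have heven : ∀ q, Even (b.natAbs.factorization q) := by
      intro q
      have h3 : ((b.natAbs.factorization q : ZMod 2)) = 0 := by
        simpa using congrFun h2 q
      rw [ZMod.natCast_eq_zero_iff] at h3
      obtain ⟨m, hm⟩ := h3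
      exact ⟨m, by omega⟩
    have hprod := Nat.factorization_prod_pow_eq_self hn0
    rw [Finsupp.prod] at hprod
    have key : (∏ q ∈ b.natAbs.factorization.support, q ^ (b.natAbs.factorization q / 2)) *
        (∏ q ∈ b.natAbs.factorization.support, q ^ (b.natAbs.factorization q / 2)) =
        ∏ q ∈ b.natAbs.factorization.support, q ^ (b.natAbs.factorization q) := by
      rw [← Finset.prod_mul_distrib]
      refine Finset.prod_congr rfl fun q _ => ?_
      rw [← pow_add]
      congr 1
      obtain ⟨m, hm⟩ := heven q
      omega
    rw [hprod] at key
    obtain ⟨R, hR⟩ : ∃ R, (∏ q ∈ b.natAbs.factorization.support,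
      q ^ (b.natAbs.factorization q / 2)) = R := ⟨_, rfl⟩
    rw [hR] at key
    refine ⟨(R : ℤ), ?_⟩
    rw [← Int.natAbs_of_nonneg hbpos, ← key]
    push_cast
    ring
  · rintro ⟨r, rfl⟩
    have hr : r ≠ 0 := fun h => hb (by simp [h])
    have hr' : r.natAbs ≠ 0 := Int.natAbs_ne_zero.2 hr
    unfold sqVec
    refine Prod.ext ?_ ?_
    · simp only [Prod.fst_zero]
      rw [if_neg (not_lt.2 (mul_self_nonneg r))]
    · funext q
      simp only [Prod.snd_zero, Pi.zero_apply]
      rw [Int.natAbs_mul, Nat.factorization_mul hr' hr']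
      rw [ZMod.natCast_eq_zero_iff]
      simp only [Finsupp.add_apply]
      omega

abbrev V2 := ZMod 2 × (ℕ → ZMod 2)

lemma zmod2_cases (c : ZMod 2) : c = 0 ∨ c = 1 := by revert c; decide

lemma zmod2_smul (c : ZMod 2) (y : V2) : c • y = if c = 1 then y else 0 := by
  rcases zmod2_cases c with h | h <;> simp [h]

lemma natCast_zmod2_odd {n : ℕ} (hn : Odd n) : (n : ZMod 2) = 1 := by
  obtain ⟨m, hm⟩ := hn
  rw [hm]
  push_cast
  rw [show ((2 : ZMod 2)) = 0 by decide]
  ring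

lemma exists_functional {ι : Type*} (B : Finset ι) (v : ι → V2)
    (h : ∀ S ⊆ B, Odd S.card → ∑ b ∈ S, v b ≠ 0) :
    ∃ f : V2 →ₗ[ZMod 2] ZMod 2, ∀ b ∈ B, f (v b) = 1 := by
  classical
  induction B using Finset.induction with
  | empty => exact ⟨0, fun b hb => absurd hb (Finset.notMem_empty b)⟩
  | @insert a s ha IH =>
    obtain ⟨f, hf⟩ := IH (fun S hS hodd => h S (hS.trans (Finset.subset_insert a s)) hodd)
    rcases zmod2_cases (f (v a)) with hfa | hfa
    · -- need to fix up `f` on `v a`; first show `v a ∉ span` of the other vectors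
      have hnotmem : v a ∉ span (ZMod 2) (↑(s.image v) : Set V2) := by
        intro hmem
        rw [mem_span_finset] at hmem
        obtain ⟨c, hc⟩ := hmem
        have hrep : ∀ y ∈ (s.image v).filter (fun y => c y = 1), ∃ b ∈ s, v b = y := by
          intro y hy
          have := Finset.mem_of_mem_filter y hy
          simpa using Finset.mem_image.1 this
        choose u hu hvu using hrep
        set T : Finset ι := ((s.image v).filter (fun y => c y = 1)).attach.image
          (fun y => u y.1 y.2) with hT
        have hTs : T ⊆ s := by
          intro b hb
          rw [hT] at hb
          obtain ⟨y, _, rfl⟩ := Finset.mem_image.1 hb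
          exact hu y.1 y.2
        have hsum : ∑ b ∈ T, v b = v a := by
          rw [hT, Finset.sum_image (fun x _ y _ hxy => by
            apply Subtype.ext
            rw [← hvu x.1 x.2, ← hvu y.1 y.2, hxy])]
          calc ∑ y ∈ ((s.image v).filter (fun y => c y = 1)).attach, v (u y.1 y.2)
              = ∑ y ∈ ((s.image v).filter (fun y => c y = 1)).attach, y.1 := by
                refine Finset.sum_congr rfl fun y _ => hvu y.1 y.2
            _ = ∑ y ∈ (s.image v).filter (fun y => c y = 1), y := Finset.sum_attach _ (fun y => y)
            _ = ∑ y ∈ s.image v, c y • y := by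
                rw [Finset.sum_filter]
                refine Finset.sum_congr rfl fun y _ => ?_
                rw [zmod2_smul]
            _ = v a := hc.2
        have hcardT : ∀ b ∈ T, f (v b) = 1 := fun b hb => hf b (hTs hb)
        have hfsum : f (v a) = (T.card : ZMod 2) := by
          rw [← hsum, map_sum]
          rw [Finset.sum_congr rfl hcardT]
          simp
        rcases Nat.even_or_odd T.card with heven | hodd
        · -- insert a T is an odd subset with zero sum
          have haT : a ∉ T := fun hb => ha (hTs hb)
          refine h (insert a T) (Finset.insert_subset_insert a hTs) ?_ ?_
          · rw [Finset.card_insert_of_notMem haT]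
            exact Even.add_one heven
          · rw [Finset.sum_insert haT, hsum]
            have := two_smul (ZMod 2) (v a)
            rw [show ((2 : ZMod 2)) = 0 by decide, zero_smul] at this
            exact this.symm
        · rw [natCast_zmod2_odd hodd] at hfsum
          rw [hfa] at hfsum
          exact one_ne_zero hfsum.symm
      -- now build a functional vanishing on the span and equal to 1 at `v a`
      set W : Submodule (ZMod 2) V2 := span (ZMod 2) (↑(s.image v) : Set V2) with hW
      have hq : W.mkQ (v a) ≠ 0 := by
        rw [Submodule.mkQ_apply, Ne, Submodule.Quotient.mk_eq_zero]
        exact hnotmem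
      have : ¬ ∀ φ : Module.Dual (ZMod 2) (V2 ⧸ W), φ (W.mkQ (v a)) = 0 := by
        rw [Module.forall_dual_apply_eq_zero_iff (ZMod 2)]
        exact hq
      push_neg at this
      obtain ⟨φ, hφ⟩ := this
      have hφ1 : φ (W.mkQ (v a)) = 1 := (zmod2_cases _).resolve_left hφ
      refine ⟨f + φ.comp W.mkQ, fun b hb => ?_⟩
      rcases Finset.mem_insert.1 hb with rfl | hb
      · simp only [LinearMap.add_apply, LinearMap.comp_apply, hfa, hφ1, zero_add]
      · have hbW : v b ∈ W := Submodule.subset_span (by simp [Finset.mem_image]; exact ⟨b, hb, rfl⟩)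
        simp only [LinearMap.add_apply, LinearMap.comp_apply, hf b hb, Submodule.mkQ_apply]
        rw [(Submodule.Quotient.mk_eq_zero W).2 hbW, map_zero, add_zero]
    · exact ⟨f, fun b hb => by
        rcases Finset.mem_insert.1 hb with rfl | hb
        · exact hfa
        · exact hf b hb⟩

lemma neg_one_pow_congr' {m n : ℕ} (h : m % 2 = n % 2) : ((-1 : ℤ)) ^ m = (-1) ^ n := by
  rcases Nat.even_or_odd m with he | ho
  · have hm := Nat.even_iff.1 he
    have hn : Even n := Nat.even_iff.2 (by omega)
    rw [he.neg_one_pow, hn.neg_one_pow]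
  · have hm := Nat.odd_iff.1 ho
    have hn : Odd n := Nat.odd_iff.2 (by omega)
    rw [ho.neg_one_pow, hn.neg_one_pow]

lemma exists_crt (Q : Finset ℕ) (hQ : ∀ q ∈ Q, q.Prime ∧ q ≠ 2) (a₈ : ℕ) (r : ℕ → ℕ) :
    ∃ a : ℕ, a % 8 = a₈ % 8 ∧ ∀ q ∈ Q, a % q = r q % q := by
  classical
  induction Q using Finset.induction with
  | empty => exact ⟨a₈, rfl, by simp⟩
  | @insert q0 Q hq0 IH =>
    obtain ⟨a, ha8, haQ⟩ := IH (fun q hq => hQ q (Finset.mem_insert_of_mem hq))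
    have hq0p : q0.Prime := (hQ q0 (Finset.mem_insert_self q0 Q)).1
    have hq02 : q0 ≠ 2 := (hQ q0 (Finset.mem_insert_self q0 Q)).2
    set M : ℕ := 8 * ∏ q ∈ Q, q with hM
    have hco : M.Coprime q0 := by
      refine Nat.Coprime.symm ((Nat.Prime.coprime_iff_not_dvd hq0p).2 ?_)
      intro hdvd
      rcases (Nat.Prime.dvd_mul hq0p).1 hdvd with h8 | hprod
      · have : q0 ∣ 2 ^ 3 := by norm_num at h8 ⊢; exact h8
        exact hq02 (Nat.prime_dvd_prime_iff_eq hq0p Nat.prime_two |>.1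
          (hq0p.dvd_of_dvd_pow this))
      · obtain ⟨q, hqQ, hdvd'⟩ := (Prime.dvd_finset_prod_iff hq0p.prime _).1 hprod
        have := (Nat.prime_dvd_prime_iff_eq hq0p (hQ q (Finset.mem_insert_of_mem hqQ)).1).1 hdvd'
        exact hq0 (this ▸ hqQ)
    obtain ⟨a', ha'1, ha'2⟩ := Nat.chineseRemainder hco a (r q0)
    refine ⟨a', ?_, ?_⟩
    · have h8M : (8 : ℕ) ∣ M := ⟨_, rfl⟩
      have : a' ≡ a [MOD 8] := (ha'1.of_dvd h8M)
      calc a' % 8 = a % 8 := this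
        _ = a₈ % 8 := ha8
    · intro q hq
      rcases Finset.mem_insert.1 hq with rfl | hqQ
      · exact ha'2
      · have hqM : q ∣ M := Dvd.dvd.mul_left (Finset.dvd_prod_of_mem _ hqQ) 8
        have : a' ≡ a [MOD q] := ha'1.of_dvd hqM
        calc a' % q = a % q := this
          _ = r q % q := haQ q hqQ

/-- `p` is an odd prime avoiding `Q` with prescribed Legendre symbol values. -/
def GoodPrime (Q : Finset ℕ) (e₁ e₂ : ℤ) (ε : ℕ → ℤ) (p : ℕ) : Prop :=
  ∃ hp : p.Prime, p ≠ 2 ∧ (∀ q ∈ Q, p ≠ q) ∧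
    @legendreSym p ⟨hp⟩ (-1) = e₁ ∧ @legendreSym p ⟨hp⟩ 2 = e₂ ∧
    ∀ q ∈ Q, @legendreSym p ⟨hp⟩ (q : ℤ) = ε q

lemma infinite_good_primes (Q : Finset ℕ) (hQ : ∀ q ∈ Q, q.Prime ∧ q ≠ 2)
    (e₁ e₂ : ℤ) (he₁ : e₁ = 1 ∨ e₁ = -1) (he₂ : e₂ = 1 ∨ e₂ = -1)
    (ε : ℕ → ℤ) (hε : ∀ q ∈ Q, ε q = 1 ∨ ε q = -1) :
    {p : ℕ | GoodPrime Q e₁ e₂ ε p}.Infinite := by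
  classical
  -- choose the residue class mod 8
  obtain ⟨a₈, ha₈lt, ha₈odd, hχ₄, hχ₈⟩ : ∃ a₈ : ℕ, a₈ < 8 ∧ a₈ % 2 = 1 ∧
      ZMod.χ₄ ((a₈ : ℕ) : ZMod 4) = e₁ ∧ ZMod.χ₈ ((a₈ : ℕ) : ZMod 8) = e₂ := by
    rcases he₁ with rfl | rfl <;> rcases he₂ with rfl | rfl
    · exact ⟨1, by norm_num, by norm_num, by decide, by decide⟩
    · exact ⟨5, by norm_num, by norm_num, by decide, by decide⟩
    · exact ⟨7, by norm_num, by norm_num, by decide, by decide⟩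
    · exact ⟨3, by norm_num, by norm_num, by decide, by decide⟩
  -- choose residues mod each q ∈ Q
  have hres : ∀ q : ℕ, ∃ rq : ℕ, ∀ hqm : q ∈ Q,
      ((rq : ZMod q) ≠ 0 ∧
        @legendreSym q ⟨(hQ q hqm).1⟩ (rq : ℤ) = (-1) ^ (a₈ / 2 * (q / 2)) * ε q) := by
    intro q
    by_cases hq : q ∈ Q
    · haveI : Fact q.Prime := ⟨(hQ q hq).1⟩
      have hq2 : q ≠ 2 := (hQ q hq).2
      have hsgn : ((-1 : ℤ)) ^ (a₈ / 2 * (q / 2)) = 1 ∨ ((-1 : ℤ)) ^ (a₈ / 2 * (q / 2)) = -1 :=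
        (Nat.even_or_odd _).imp Even.neg_one_pow Odd.neg_one_pow
      have htgt : (-1 : ℤ) ^ (a₈ / 2 * (q / 2)) * ε q = 1 ∨
          (-1 : ℤ) ^ (a₈ / 2 * (q / 2)) * ε q = -1 := by
        rcases hsgn with h | h <;> rcases hε q hq with h' | h' <;> rw [h, h'] <;> norm_num
      rcases htgt with h | h
      · refine ⟨1, fun _ => ⟨?_, ?_⟩⟩
        · rw [Nat.cast_one]; exact one_ne_zero
        · rw [Nat.cast_one, legendreSym.at_one, h]
      · obtain ⟨x, hx⟩ := quadraticChar_exists_neg_one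
          (by rw [ZMod.ringChar_zmod_n]; exact hq2 : ringChar (ZMod q) ≠ 2)
        have hx0 : x ≠ 0 := by
          intro h0
          rw [h0, quadraticChar_zero] at hx
          norm_num at hx
        refine ⟨x.val, fun _ => ⟨?_, ?_⟩⟩
        · rw [ZMod.natCast_zmod_val]; exact hx0
        · have hcast : (((x.val : ℕ) : ℤ) : ZMod q) = x := by
            push_cast
            exact ZMod.natCast_zmod_val x
          have : legendreSym q ((x.val : ℕ) : ℤ) = quadraticChar (ZMod q) x := by
            rw [show legendreSym q ((x.val : ℕ) : ℤ)
              = quadraticChar (ZMod q) ((((x.val : ℕ) : ℤ)) : ZMod q) from rfl, hcast]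
          rw [this, hx, h]
    · exact ⟨0, fun h => absurd h hq⟩
  choose r hr using hres
  -- CRT
  obtain ⟨a, ha8, haQ⟩ := exists_crt Q hQ a₈ r
  rw [Nat.mod_eq_of_lt ha₈lt] at ha8
  set M : ℕ := 8 * ∏ q ∈ Q, q with hM
  have hMpos : 0 < M := by
    refine Nat.mul_pos (by norm_num) (Finset.prod_pos fun q hq => (hQ q hq).1.pos)
  haveI : NeZero M := ⟨hMpos.ne'⟩
  have h8M : (8 : ℕ) ∣ M := ⟨_, rfl⟩
  have hqM : ∀ q ∈ Q, q ∣ M := fun q hq => Dvd.dvd.mul_left (Finset.dvd_prod_of_mem _ hq) 8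
  -- `a` is a unit mod `M`
  have hco : a.Coprime M := by
    rw [hM, Nat.coprime_mul_iff_right]
    constructor
    · have : a % 2 = 1 := by omega
      have h2 : a.Coprime 2 := Nat.Coprime.symm
        ((Nat.prime_two.coprime_iff_not_dvd).2 (fun hdvd => by obtain ⟨c, rfl⟩ := hdvd; omega))
      simpa using h2.pow_right 3
    · refine Nat.Coprime.prod_right fun q hq => ?_
      refine Nat.Coprime.symm ((Nat.Prime.coprime_iff_not_dvd (hQ q hq).1).2 ?_)
      intro hdvd
      have : (a : ZMod q) = 0 := (ZMod.natCast_eq_zero_iff a q).2 hdvd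
      have haq : (a : ZMod q) = ((r q : ℕ) : ZMod q) :=
        (ZMod.natCast_eq_natCast_iff _ _ _).2 (haQ q hq)
      exact (hr q hq).1 (by rw [← haq, this])
  have hunit : IsUnit ((a : ℕ) : ZMod M) := (ZMod.isUnit_iff_coprime a M).2 hco
  refine (Nat.infinite_setOfPred_prime_and_eq_mod hunit).mono ?_
  rintro p ⟨hp, hpM⟩
  have hpa : p ≡ a [MOD M] := (ZMod.natCast_eq_natCast_iff _ _ _).1 hpM
  have h8 : p % 8 = a₈ := by
    have := hpa.of_dvd h8M
    unfold Nat.ModEq at this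
    omega
  have hp2 : p ≠ 2 := by
    intro rfl_h
    rw [rfl_h] at h8
    omega
  haveI : Fact p.Prime := ⟨hp⟩
  have hpq : ∀ q ∈ Q, (p : ZMod q) = ((r q : ℕ) : ZMod q) := by
    intro q hq
    have h1 : p ≡ a [MOD q] := hpa.of_dvd (hqM q hq)
    have h2 : a ≡ r q [MOD q] := haQ q hq
    exact (ZMod.natCast_eq_natCast_iff _ _ _).2 (h1.trans h2)
  have hpneq : ∀ q ∈ Q, p ≠ q := by
    intro q hq rfl_h
    apply (hr q hq).1
    rw [← hpq q hq, rfl_h, ZMod.natCast_self]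
  refine ⟨hp, hp2, hpneq, ?_, ?_, ?_⟩
  · rw [legendreSym.at_neg_one hp2, ZMod.χ₄_nat_mod_four]
    have h4 : p % 4 = a₈ % 4 := by omega
    rw [h4, ← ZMod.χ₄_nat_mod_four]
    exact hχ₄
  · rw [legendreSym.at_two hp2, ZMod.χ₈_nat_mod_eight, h8]
    exact hχ₈
  · intro q hq
    haveI : Fact q.Prime := ⟨(hQ q hq).1⟩
    have hq2 : q ≠ 2 := (hQ q hq).2
    have hrec := legendreSym.quadratic_reciprocity' (p := p) (q := q) hp2 hq2
    have hparity : p / 2 % 2 = a₈ / 2 % 2 := by omega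
    have hsign : ((-1 : ℤ)) ^ (p / 2 * (q / 2)) = (-1) ^ (a₈ / 2 * (q / 2)) :=
      neg_one_pow_congr' (Nat.ModEq.mul_right (q / 2) hparity)
    have hlqp : legendreSym q (p : ℤ) = (-1) ^ (a₈ / 2 * (q / 2)) * ε q := by
      have hcast : ((p : ℤ) : ZMod q) = (((r q : ℕ) : ℤ) : ZMod q) := by
        push_cast
        exact hpq q hq
      calc legendreSym q (p : ℤ)
          = quadraticChar (ZMod q) (((p : ℤ) : ZMod q)) := rfl
        _ = quadraticChar (ZMod q) ((((r q : ℕ) : ℤ) : ZMod q)) := by rw [hcast]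
        _ = legendreSym q ((r q : ℕ) : ℤ) := rfl
        _ = (-1) ^ (a₈ / 2 * (q / 2)) * ε q := (hr q hq).2
    rw [hlqp, hsign] at hrec
    have hs0 : ((-1 : ℤ)) ^ (a₈ / 2 * (q / 2)) ≠ 0 := pow_ne_zero _ (by norm_num)
    exact (mul_left_cancel₀ hs0 hrec).symm

noncomputable section

/-- turn a `ZMod 2` element into a sign -/
def iota (e : ZMod 2) : ℤ := if e = 1 then -1 else 1

lemma iota_pm (e : ZMod 2) : iota e = 1 ∨ iota e = -1 := by
  rcases zmod2_cases e with h | h <;> simp [iota, h]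

lemma iota_zero : iota 0 = 1 := by decide

lemma iota_one : iota 1 = -1 := by decide

lemma iota_add (x y : ZMod 2) : iota (x + y) = iota x * iota y := by
  revert x y; decide

lemma iota_pow (z : ZMod 2) (n : ℕ) : iota z ^ n = iota ((n : ZMod 2) * z) := by
  rcases zmod2_cases z with h | h
  · rw [h, mul_zero, iota_zero, one_pow]
  · rw [h, mul_one, iota_one]
    rcases Nat.even_or_odd n with he | ho
    · rw [he.neg_one_pow]
      have hn : (n : ZMod 2) = 0 := by
        obtain ⟨m, hm⟩ := he
        rw [hm]; push_cast
        rw [← two_mul, show ((2:ZMod 2)) = 0 by decide, zero_mul]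
      rw [hn, iota_zero]
    · rw [ho.neg_one_pow, natCast_zmod2_odd ho, iota_one]

lemma iota_sum {α : Type*} (s : Finset α) (c : α → ZMod 2) :
    ∏ q ∈ s, iota (c q) = iota (∑ q ∈ s, c q) := by
  classical
  induction s using Finset.induction with
  | empty => simp [iota_zero]
  | @insert a s ha IH => rw [Finset.prod_insert ha, Finset.sum_insert ha, iota_add, IH]

/-- the key decomposition of `sqVec b` into basis vectors -/
lemma sqVec_decomp (b : ℤ) :
    sqVec b = (if b < 0 then (1 : ZMod 2) else 0) • ((1 : ZMod 2), (0 : ℕ → ZMod 2)) +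
      ∑ q ∈ b.natAbs.primeFactors,
        ((b.natAbs.factorization q : ZMod 2)) •
          ((0 : ZMod 2), (fun r => if r = q then (1 : ZMod 2) else 0)) := by
  unfold sqVec
  refine Prod.ext ?_ ?_
  · simp only [Prod.fst_add, Prod.smul_fst, Finset.sum_apply, Prod.fst_sum]
    rw [Finset.sum_eq_zero (fun q _ => by simp), add_zero]
    rcases em (b < 0) with h | h <;> simp [h]
  · simp only [Prod.snd_add, Prod.smul_snd, Prod.snd_sum]
    funext r
    simp only [Pi.add_apply, Pi.smul_apply, Finset.sum_apply, smul_eq_mul, mul_ite,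
      mul_one, mul_zero, smul_zero, Pi.zero_apply]
    rw [zero_add]
    rw [Finset.sum_congr rfl (fun q _ => by
      rw [show (if r = q then (b.natAbs.factorization q : ZMod 2) else 0)
        = if q = r then (b.natAbs.factorization q : ZMod 2) else 0 by simp [eq_comm]])]
    rw [Finset.sum_ite_eq' b.natAbs.primeFactors r
      (fun q => (b.natAbs.factorization q : ZMod 2))]
    rcases em (r ∈ b.natAbs.primeFactors) with h | h
    · simp [h]
    · rw [if_neg h]
      have : b.natAbs.factorization r = 0 := by
        rwa [← Nat.support_factorization, Finsupp.notMem_support_iff] at h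
      rw [this]
      simp

end

lemma sqVec_one : sqVec 1 = 0 := by
  unfold sqVec
  refine Prod.ext (by norm_num) ?_
  funext q
  simp

lemma fried_direction (B : Finset ℤ) (h0 : (0:ℤ) ∉ B)
    (hodd : ∀ S ⊆ B, Odd S.card → ¬ IsSquare (∏ b ∈ S, b)) :
    {p : ℕ | p.Prime ∧ ¬ ∃ b ∈ B, ∃ x : ZMod p, x ^ 2 = (b : ZMod p)}.Infinite := by
  classical
  have hbne : ∀ b ∈ B, b ≠ 0 := fun b hb h => h0 (h ▸ hb)
  have hprodvec : ∀ S : Finset ℤ, (∀ b ∈ S, b ≠ 0) →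
      sqVec (∏ b ∈ S, b) = ∑ b ∈ S, sqVec b := by
    intro S
    induction S using Finset.induction with
    | empty => intro _; rw [Finset.prod_empty, Finset.sum_empty]; exact sqVec_one
    | @insert a s ha IH =>
      intro hS
      have ha0 : a ≠ 0 := hS a (Finset.mem_insert_self a s)
      have hs0 : ∀ b ∈ s, b ≠ 0 := fun b hb => hS b (Finset.mem_insert_of_mem hb)
      rw [Finset.prod_insert ha, Finset.sum_insert ha,
        sqVec_mul ha0 (Finset.prod_ne_zero_iff.2 hs0), IH hs0]
  obtain ⟨f, hf⟩ := exists_functional B sqVec (by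
    intro S hS hcard
    have hS0 : ∀ b ∈ S, b ≠ 0 := fun b hb => hbne b (hS hb)
    rw [← hprodvec S hS0]
    intro hzero
    exact hodd S hS hcard ((sqVec_eq_zero_iff (Finset.prod_ne_zero_iff.2 hS0)).1 hzero))
  set P : ℕ := ∏ b ∈ B, b.natAbs with hP
  have hP0 : P ≠ 0 := by
    rw [hP, Finset.prod_ne_zero_iff]
    exact fun b hb => Int.natAbs_ne_zero.2 (hbne b hb)
  set Q : Finset ℕ := P.primeFactors.erase 2 with hQdef
  have hQ : ∀ q ∈ Q, q.Prime ∧ q ≠ 2 := fun q hq =>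
    ⟨Nat.prime_of_mem_primeFactors (Finset.mem_of_mem_erase hq), Finset.ne_of_mem_erase hq⟩
  set e₁ : ℤ := iota (f ((1 : ZMod 2), (0 : ℕ → ZMod 2))) with he₁def
  set ε : ℕ → ℤ := fun q => iota (f ((0 : ZMod 2),
    (fun r => if r = q then (1 : ZMod 2) else 0))) with hεdef
  have hinf := infinite_good_primes Q hQ e₁ (ε 2) (iota_pm _) (iota_pm _) ε (fun q _ => iota_pm _)
  refine hinf.mono ?_
  rintro p ⟨hp, hp2, hpQ, hleg1, hleg2, hlegq⟩
  haveI : Fact p.Prime := ⟨hp⟩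
  refine ⟨hp, ?_⟩
  rintro ⟨b, hb, x, hx⟩
  have hb0 : b ≠ 0 := hbne b hb
  have hbAbs : b.natAbs ≠ 0 := Int.natAbs_ne_zero.2 hb0
  -- Legendre symbols of all prime factors of b are prescribed
  have hqsym : ∀ q ∈ b.natAbs.primeFactors, legendreSym p (q : ℤ) = ε q := by
    intro q hqb
    have hqP : q ∈ P.primeFactors := by
      rw [Nat.mem_primeFactors] at hqb ⊢
      exact ⟨hqb.1, hqb.2.1.trans (Finset.dvd_prod_of_mem (fun b => b.natAbs) hb), hP0⟩
    rcases em (q = 2) with rfl | hq2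
    · have : ((2 : ℕ) : ℤ) = 2 := by norm_num
      rw [this]
      exact hleg2
    · exact hlegq q (Finset.mem_erase.2 ⟨hq2, hqP⟩)
  -- decompose b and compute its Legendre symbol
  have hsplit : b = (if b < 0 then (-1 : ℤ) else 1) * (b.natAbs : ℤ) := by
    rcases em (b < 0) with h | h
    · rw [if_pos h, ← Int.abs_eq_natAbs, abs_of_neg h]; ring
    · rw [if_neg h, ← Int.abs_eq_natAbs, abs_of_nonneg (not_lt.1 h)]; ring
  have hfactnat := Nat.factorization_prod_pow_eq_self hbAbs
  rw [Finsupp.prod, Nat.support_factorization] at hfactnat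
  have hfact : (b.natAbs : ℤ) =
      ∏ q ∈ b.natAbs.primeFactors, (q : ℤ) ^ (b.natAbs.factorization q) := by
    conv_lhs => rw [← hfactnat]
    push_cast
    rfl
  have hlegb : legendreSym p b = -1 := by
    have step1 : legendreSym p b = legendreSym p (if b < 0 then (-1 : ℤ) else 1) *
        ∏ q ∈ b.natAbs.primeFactors, (legendreSym p (q : ℤ)) ^ (b.natAbs.factorization q) := by
      nth_rewrite 1 [hsplit]
      rw [hfact, legendreSym.mul]
      congr 1
      rw [show legendreSym p (∏ q ∈ b.natAbs.primeFactors, (q : ℤ) ^ (b.natAbs.factorization q))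
        = (legendreSym.hom p) (∏ q ∈ b.natAbs.primeFactors,
          (q : ℤ) ^ (b.natAbs.factorization q)) from rfl, map_prod]
      exact Finset.prod_congr rfl fun q _ => by rw [map_pow]; rfl
    have hsgn : legendreSym p (if b < 0 then (-1 : ℤ) else 1) =
        iota ((if b < 0 then (1 : ZMod 2) else 0) * f ((1 : ZMod 2), (0 : ℕ → ZMod 2))) := by
      rcases em (b < 0) with h | h
      · rw [if_pos h, if_pos h, one_mul]
        exact hleg1
      · rw [if_neg h, if_neg h, zero_mul, iota_zero, legendreSym.at_one]
    have hpows : ∀ q ∈ b.natAbs.primeFactors,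
        (legendreSym p (q : ℤ)) ^ (b.natAbs.factorization q) =
        iota (((b.natAbs.factorization q : ZMod 2)) * f ((0 : ZMod 2),
          (fun r => if r = q then (1 : ZMod 2) else 0))) := by
      intro q hqb
      rw [hqsym q hqb, hεdef]
      exact iota_pow _ _
    rw [step1, hsgn, Finset.prod_congr rfl hpows, iota_sum, ← iota_add]
    have harg : (if b < 0 then (1 : ZMod 2) else 0) * f ((1 : ZMod 2), (0 : ℕ → ZMod 2)) +
        ∑ q ∈ b.natAbs.primeFactors, ((b.natAbs.factorization q : ZMod 2)) *
          f ((0 : ZMod 2), (fun r => if r = q then (1 : ZMod 2) else 0)) = f (sqVec b) := by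
      rw [sqVec_decomp b, map_add, LinearMap.map_smul, smul_eq_mul, map_sum]
      congr 1
      exact Finset.sum_congr rfl fun q _ => by rw [LinearMap.map_smul, smul_eq_mul]
    rw [harg, hf b hb, iota_one]
  exact (legendreSym.eq_neg_one_iff p).1 hlegb ⟨x, by rw [← hx, sq]⟩

lemma nat_sq_extract {m r t s : ℕ} (hr : Squarefree r) (ht : t ≠ 0)
    (h : m * (t ^ 2 * r) = s * s) : ∃ u, m = r * u ^ 2 := by
  have hr0 : r ≠ 0 := hr.ne_zero
  have ht2 : t ^ 2 ∣ s ^ 2 := ⟨m * r, by rw [sq s, ← h]; ring⟩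
  obtain ⟨v, hv⟩ := (Nat.pow_dvd_pow_iff two_ne_zero).1 ht2
  have hmr : m * r = v ^ 2 := by
    have h2 : t ^ 2 * (m * r) = t ^ 2 * v ^ 2 := by
      rw [show t ^ 2 * (m * r) = m * (t ^ 2 * r) by ring, h, hv]; ring
    exact Nat.eq_of_mul_eq_mul_left (Nat.pos_of_ne_zero (pow_ne_zero 2 ht)) h2
  have hrv : r ∣ v := (hr.dvd_pow_iff_dvd two_ne_zero).1 ⟨m, by rw [← hmr]; ring⟩
  obtain ⟨u, hu⟩ := hrv
  refine ⟨u, ?_⟩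
  have h3 : m * r = (r * u ^ 2) * r := by rw [hmr, hu]; ring
  exact Nat.eq_of_mul_eq_mul_right (Nat.pos_of_ne_zero hr0) h3

lemma card_square_fiber (N : ℕ) (P : ℤ) (hP : P ≠ 0) :
    ((Finset.Icc (-(N : ℤ)) N).filter (fun y => IsSquare (y * P))).card ≤ N.sqrt + 1 := by
  classical
  obtain ⟨r, t, hrt, hr⟩ := Nat.sq_mul_squarefree P.natAbs
  have hPA : P.natAbs ≠ 0 := Int.natAbs_ne_zero.2 hP
  have hr0 : r ≠ 0 := hr.ne_zero
  have ht0 : t ≠ 0 := by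
    intro h; rw [h] at hrt; simp at hrt; exact hPA hrt.symm
  set σ : ℤ := if 0 < P then 1 else -1 with hσ
  have hsub : ((Finset.Icc (-(N : ℤ)) N).filter (fun y => IsSquare (y * P))) ⊆
      (Finset.range (N.sqrt + 1)).image (fun u : ℕ => σ * ((r * u ^ 2 : ℕ) : ℤ)) := by
    intro y hy
    rw [Finset.mem_filter, Finset.mem_Icc] at hy
    obtain ⟨⟨hy1, hy2⟩, hsq⟩ := hy
    rcases em (y = 0) with rfl | hy0
    · refine Finset.mem_image.2 ⟨0, Finset.mem_range.2 (Nat.succ_pos _), ?_⟩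
      simp
    · obtain ⟨w, hw⟩ := hsq
      have hyP : 0 < y * P := by
        have h1 : y * P ≠ 0 := mul_ne_zero hy0 hP
        have h2 : 0 ≤ y * P := hw ▸ mul_self_nonneg w
        exact h2.lt_of_ne (Ne.symm h1)
      have hnat : y.natAbs * (t ^ 2 * r) = w.natAbs * w.natAbs := by
        have hna := congrArg Int.natAbs hw
        rw [Int.natAbs_mul, Int.natAbs_mul] at hna
        rw [hrt]
        exact hna
      obtain ⟨u, hu⟩ := nat_sq_extract hr ht0 hnat
      have huN : u ≤ N.sqrt := by
        have h1 : y.natAbs ≤ N := by omega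
        have h2 : u * u ≤ N := by
          have : r * u ^ 2 ≤ N := hu ▸ h1
          nlinarith [Nat.pos_of_ne_zero hr0]
        exact Nat.le_sqrt.2 h2
      refine Finset.mem_image.2 ⟨u, Finset.mem_range.2 (by omega), ?_⟩
      rcases em (0 < P) with hPpos | hPneg
      · have hypos : 0 < y := by
          by_contra hle
          push_neg at hle
          nlinarith
        rw [hσ, if_pos hPpos, one_mul, ← hu]
        exact Int.natAbs_of_nonneg hypos.le
      · have hPneg' : P < 0 := hP.lt_or_gt.resolve_right hPneg
        have hyneg : y < 0 := by
          by_contra hge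
          push_neg at hge
          nlinarith
        rw [hσ, if_neg hPneg, ← hu]
        rw [neg_one_mul]
        have : (y.natAbs : ℤ) = -y := by
          rw [← Int.abs_eq_natAbs, abs_of_neg hyneg]
        rw [this, neg_neg]
  calc ((Finset.Icc (-(N : ℤ)) N).filter (fun y => IsSquare (y * P))).card
      ≤ ((Finset.range (N.sqrt + 1)).image (fun u : ℕ => σ * ((r * u ^ 2 : ℕ) : ℤ))).card :=
        Finset.card_le_card hsub
    _ ≤ (Finset.range (N.sqrt + 1)).card := Finset.card_image_le
    _ = N.sqrt + 1 := Finset.card_range _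

lemma card_Icc_int (N : ℕ) : (Finset.Icc (-(N : ℤ)) N).card = 2 * N + 1 := by
  rw [Int.card_Icc]
  omega

lemma card_good_m (N m : ℕ) (hm : 1 ≤ m) :
    (((Finset.Icc (-(N : ℤ)) N).powersetCard m).filter
        (fun S => IsSquare (∏ b ∈ S, b))).card
      ≤ (2 * N + 1) ^ (m - 1) * (N.sqrt + 2) := by
  classical
  set I : Finset ℤ := Finset.Icc (-(N : ℤ)) N with hI
  set F : Finset (Finset ℤ) := (I.powersetCard m).filter (fun S => IsSquare (∏ b ∈ S, b)) with hF
  have hchoosele : ∀ J : Finset ℤ, J ⊆ I → (J.powersetCard (m-1)).card ≤ (2*N+1)^(m-1) := by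
    intro J hJ
    calc (J.powersetCard (m-1)).card ≤ (I.powersetCard (m-1)).card :=
          Finset.card_le_card (Finset.powersetCard_mono hJ)
      _ = (2*N+1).choose (m-1) := by rw [Finset.card_powersetCard, hI, card_Icc_int]
      _ ≤ (2*N+1)^(m-1) := Nat.choose_le_pow _ _
  have hsplit := Finset.card_filter_add_card_filter_not
    (s := F) (p := fun S => (0 : ℤ) ∈ S)
  -- part containing 0
  have h0 : (F.filter (fun S => (0:ℤ) ∈ S)).card ≤ (2*N+1)^(m-1) := by
    refine le_trans (Finset.card_le_card_of_injOn (fun S => S.erase 0)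
      (fun S hS => ?_) (fun S1 h1 S2 h2 he => ?_)) (hchoosele I Finset.Subset.rfl)
    · rw [Finset.mem_coe, Finset.mem_filter] at hS
      obtain ⟨hSF, h0S⟩ := hS
      rw [hF, Finset.mem_filter, Finset.mem_powersetCard] at hSF
      rw [Finset.mem_coe, Finset.mem_powersetCard]
      exact ⟨(Finset.erase_subset _ _).trans hSF.1.1,
        by rw [Finset.card_erase_of_mem h0S, hSF.1.2]⟩
    · rw [Finset.mem_coe, Finset.mem_filter] at h1 h2
      dsimp only at he
      rw [← Finset.insert_erase h1.2, ← Finset.insert_erase h2.2, he]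
  -- part not containing 0
  have h1 : (F.filter (fun S => ¬ (0:ℤ) ∈ S)).card ≤ (2*N+1)^(m-1) * (N.sqrt + 1) := by
    set T := ((I.erase 0).powersetCard (m-1)).sigma
      (fun S' => I.filter (fun y => IsSquare (y * ∏ b ∈ S', b))) with hT
    have hstep : (F.filter (fun S => ¬ (0:ℤ) ∈ S)).card ≤ T.card := by
      refine Finset.card_le_card_of_injOn
        (fun S => ⟨S.erase (if h : S.Nonempty then S.max' h else 0),
          if h : S.Nonempty then S.max' h else 0⟩) (fun S hS => ?_) (fun S1 hS1 S2 hS2 he => ?_)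
      · rw [Finset.mem_coe, Finset.mem_filter] at hS
        obtain ⟨hSF, h0S⟩ := hS
        rw [hF, Finset.mem_filter, Finset.mem_powersetCard] at hSF
        obtain ⟨⟨hSI, hcard⟩, hsq⟩ := hSF
        have hne : S.Nonempty := Finset.card_pos.1 (by omega)
        simp only [dif_pos hne]
        have hmax : S.max' hne ∈ S := S.max'_mem hne
        rw [Finset.mem_coe, hT, Finset.mem_sigma]
        constructor
        · rw [Finset.mem_powersetCard]
          refine ⟨fun b hb => ?_, by rw [Finset.card_erase_of_mem hmax, hcard]⟩
          rw [Finset.mem_erase] at hb ⊢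
          exact ⟨fun hb0 => h0S (hb0 ▸ hb.2), hSI hb.2⟩
        · rw [Finset.mem_filter]
          refine ⟨hSI hmax, ?_⟩
          dsimp only
          rwa [Finset.mul_prod_erase S (fun b => b) hmax]
      · rw [Finset.mem_coe, Finset.mem_filter] at hS1 hS2
        have hne1 : S1.Nonempty := by
          rw [hF, Finset.mem_filter, Finset.mem_powersetCard] at hS1
          exact Finset.card_pos.1 (by omega)
        have hne2 : S2.Nonempty := by
          rw [hF, Finset.mem_filter, Finset.mem_powersetCard] at hS2
          exact Finset.card_pos.1 (by omega)
        simp only [dif_pos hne1, dif_pos hne2] at he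
        obtain ⟨hA, hx⟩ := Sigma.mk.inj_iff.1 he
        have hx' : S1.max' hne1 = S2.max' hne2 := eq_of_heq hx
        rw [← Finset.insert_erase (S1.max'_mem hne1), ← Finset.insert_erase (S2.max'_mem hne2),
          hA, hx']
    have hTcard : T.card ≤ (2*N+1)^(m-1) * (N.sqrt + 1) := by
      rw [hT, Finset.card_sigma]
      calc ∑ S' ∈ (I.erase 0).powersetCard (m-1),
            (I.filter (fun y => IsSquare (y * ∏ b ∈ S', b))).card
          ≤ ∑ S' ∈ (I.erase 0).powersetCard (m-1), (N.sqrt + 1) := by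
            refine Finset.sum_le_sum fun S' hS' => ?_
            have hprod : (∏ b ∈ S', b) ≠ 0 := by
              rw [Finset.prod_ne_zero_iff]
              intro b hb
              rw [Finset.mem_powersetCard] at hS'
              exact Finset.ne_of_mem_erase (hS'.1 hb)
            exact card_square_fiber N _ hprod
        _ = ((I.erase 0).powersetCard (m-1)).card * (N.sqrt + 1) := by
            rw [Finset.sum_const, smul_eq_mul]
        _ ≤ (2*N+1)^(m-1) * (N.sqrt + 1) :=
            Nat.mul_le_mul_right _ (hchoosele _ (Finset.erase_subset _ _))
    exact hstep.trans hTcard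
  have : F.card = (F.filter (fun S => (0:ℤ) ∈ S)).card +
      (F.filter (fun S => ¬ (0:ℤ) ∈ S)).card := hsplit.symm
  rw [this]
  calc (F.filter (fun S => (0:ℤ) ∈ S)).card + (F.filter (fun S => ¬ (0:ℤ) ∈ S)).card
      ≤ (2*N+1)^(m-1) + (2*N+1)^(m-1) * (N.sqrt + 1) := Nat.add_le_add h0 h1
    _ = (2*N+1)^(m-1) * (N.sqrt + 2) := by ring

/-- `B` contains a square modulo all but finitely many primes. -/
def ContainsSquareModAEPrime (B : Finset ℤ) : Prop :=
  {p : ℕ | p.Prime ∧ ¬ ∃ b ∈ B, ∃ x : ZMod p, x ^ 2 = (b : ZMod p)}.Finite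

lemma exists_odd_square_subset (B : Finset ℤ) (h : ContainsSquareModAEPrime B) :
    ∃ S ⊆ B, Odd S.card ∧ IsSquare (∏ b ∈ S, b) := by
  by_cases h0 : (0 : ℤ) ∈ B
  · refine ⟨{0}, Finset.singleton_subset_iff.2 h0, by norm_num, ?_⟩
    rw [Finset.prod_singleton]
    exact ⟨0, by norm_num⟩
  · by_contra hno
    push_neg at hno
    have hodd : ∀ S ⊆ B, Odd S.card → ¬ IsSquare (∏ b ∈ S, b) := fun S hS ho hsq =>
      (hno S hS ho) hsq
    exact (fried_direction B h0 hodd) h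

open scoped Classical in
lemma card_filter_master (k N : ℕ) :
    (((Finset.Icc (-(N : ℤ)) N).powersetCard k).filter ContainsSquareModAEPrime).card
      ≤ ∑ m ∈ Finset.Icc 1 k, (2*N+1)^(m-1) * (N.sqrt + 2) * (2*N+1)^(k-m) := by
  set I : Finset ℤ := Finset.Icc (-(N : ℤ)) N with hI
  have hsubset : (I.powersetCard k).filter ContainsSquareModAEPrime ⊆
      (Finset.Icc 1 k).biUnion (fun m =>
        (((I.powersetCard m).filter (fun S => IsSquare (∏ b ∈ S, b))) ×ˢ
          (I.powersetCard (k-m))).image (fun pr => pr.1 ∪ pr.2)) := by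
    intro B hB
    rw [Finset.mem_filter, Finset.mem_powersetCard] at hB
    obtain ⟨⟨hBI, hBcard⟩, hprop⟩ := hB
    obtain ⟨S, hSB, hSodd, hSsq⟩ := exists_odd_square_subset B hprop
    have hm1 : 1 ≤ S.card := by
      rcases hSodd with ⟨r, hr⟩
      omega
    have hmk : S.card ≤ k := hBcard ▸ Finset.card_le_card hSB
    rw [Finset.mem_biUnion]
    refine ⟨S.card, Finset.mem_Icc.2 ⟨hm1, hmk⟩, Finset.mem_image.2
      ⟨(S, B \ S), Finset.mem_product.2 ⟨?_, ?_⟩, ?_⟩⟩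
    · rw [Finset.mem_filter, Finset.mem_powersetCard]
      exact ⟨⟨hSB.trans hBI, rfl⟩, hSsq⟩
    · rw [Finset.mem_powersetCard]
      refine ⟨Finset.Subset.trans (Finset.sdiff_subset) hBI, ?_⟩
      rw [Finset.card_sdiff_of_subset hSB, hBcard]
    · exact Finset.union_sdiff_of_subset hSB
  refine le_trans (Finset.card_le_card hsubset) ?_
  refine le_trans (Finset.card_biUnion_le) (Finset.sum_le_sum fun m hm => ?_)
  rw [Finset.mem_Icc] at hm
  calc ((((I.powersetCard m).filter (fun S => IsSquare (∏ b ∈ S, b))) ×ˢ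
        (I.powersetCard (k-m))).image (fun pr => pr.1 ∪ pr.2)).card
      ≤ (((I.powersetCard m).filter (fun S => IsSquare (∏ b ∈ S, b))) ×ˢ
        (I.powersetCard (k-m))).card := Finset.card_image_le
    _ = ((I.powersetCard m).filter (fun S => IsSquare (∏ b ∈ S, b))).card *
        (I.powersetCard (k-m)).card := Finset.card_product _ _
    _ ≤ ((2*N+1)^(m-1) * (N.sqrt + 2)) * (2*N+1)^(k-m) := by
        refine Nat.mul_le_mul (card_good_m N m hm.1) ?_
        rw [Finset.card_powersetCard, hI, card_Icc_int]
        exact Nat.choose_le_pow _ _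

lemma rpow_split (N k : ℕ) (hN : 1 ≤ N) (hk : 1 ≤ k) :
    (N : ℝ) ^ ((k : ℝ) - 1/2) = (N : ℝ) ^ (k - 1) * Real.sqrt N := by
  have hNpos : (0 : ℝ) < N := by exact_mod_cast Nat.pos_of_ne_zero (by omega)
  obtain ⟨j, rfl⟩ : ∃ j, k = j + 1 := ⟨k - 1, by omega⟩
  have hcast : ((j + 1 - 1 : ℕ) : ℝ) = ((j + 1 : ℕ) : ℝ) - 1 := by push_cast; ring
  rw [show ((j + 1 : ℕ) : ℝ) - 1/2 = ((j + 1 - 1 : ℕ) : ℝ) + 1/2 by rw [hcast]; push_cast; ring,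
    Real.rpow_add hNpos, Real.rpow_natCast, Real.sqrt_eq_rpow]

open scoped Classical in
lemma part1_bound (k N : ℕ) (hk : 1 ≤ k) (hN : 1 ≤ N) :
    ((((Finset.Icc (-(N : ℤ)) N).powersetCard k).filter ContainsSquareModAEPrime).card : ℝ)
      ≤ ((k : ℝ) + 1) * 3 ^ (k + 1) * (N : ℝ) ^ ((k : ℝ) - 1/2) := by
  have hNpos : (0 : ℝ) < N := by exact_mod_cast Nat.pos_of_ne_zero (by omega)
  have hN1 : (1 : ℝ) ≤ (N : ℝ) := by exact_mod_cast hN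
  have h1 : ((2 * N + 1 : ℕ) : ℝ) ≤ 3 * N := by push_cast; linarith
  have hsqle : ((N.sqrt : ℕ) : ℝ) ≤ Real.sqrt N := by
    rw [show ((N.sqrt : ℕ) : ℝ) = Real.sqrt (((N.sqrt : ℕ) : ℝ) ^ 2) from
      (Real.sqrt_sq (by positivity)).symm]
    apply Real.sqrt_le_sqrt
    exact_mod_cast Nat.sqrt_le' N
  have hsq1 : (1 : ℝ) ≤ Real.sqrt N := Real.one_le_sqrt.2 hN1
  have hsq2 : ((N.sqrt : ℕ) : ℝ) + 2 ≤ 3 * Real.sqrt N := by linarith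
  have hmaster := card_filter_master k N
  calc ((((Finset.Icc (-(N : ℤ)) N).powersetCard k).filter ContainsSquareModAEPrime).card : ℝ)
      ≤ ((∑ m ∈ Finset.Icc 1 k, (2*N+1)^(m-1) * (N.sqrt + 2) * (2*N+1)^(k-m) : ℕ) : ℝ) := by
        exact_mod_cast hmaster
    _ = ∑ m ∈ Finset.Icc 1 k, ((2*N+1 : ℕ) : ℝ)^(m-1) * (((N.sqrt : ℕ) : ℝ) + 2) *
        ((2*N+1 : ℕ) : ℝ)^(k-m) := by
        rw [Nat.cast_sum]
        exact Finset.sum_congr rfl fun m _ => by push_cast; ring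
    _ ≤ ∑ m ∈ Finset.Icc 1 k, (3*(N:ℝ))^(m-1) * (3 * Real.sqrt N) * (3*(N:ℝ))^(k-m) := by
        refine Finset.sum_le_sum fun m _ => ?_
        have hb : (0 : ℝ) ≤ ((2*N+1 : ℕ) : ℝ) := by positivity
        gcongr
    _ = ∑ m ∈ Finset.Icc 1 k, (3*(N:ℝ))^(k-1) * (3 * Real.sqrt N) := by
        refine Finset.sum_congr rfl fun m hm => ?_
        rw [Finset.mem_Icc] at hm
        rw [mul_right_comm, ← pow_add, show (m-1)+(k-m) = k-1 by omega]
    _ = (k : ℝ) * ((3*(N:ℝ))^(k-1) * (3 * Real.sqrt N)) := by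
        rw [Finset.sum_const, Nat.card_Icc]
        simp
    _ ≤ ((k : ℝ) + 1) * 3 ^ (k + 1) * (N : ℝ) ^ ((k : ℝ) - 1/2) := by
        rw [rpow_split N k hN hk, mul_pow]
        have hcoef : (k : ℝ) * (3 ^ (k-1) * 3) ≤ ((k : ℝ) + 1) * 3 ^ (k + 1) := by
          have h3 : (3 : ℝ) ^ (k-1) * 3 ≤ 3 ^ (k+1) := by
            rw [← pow_succ]
            exact pow_le_pow_right₀ (by norm_num) (by omega)
          have hk0 : (0 : ℝ) ≤ k := by positivity
          nlinarith [pow_pos (show (0:ℝ) < 3 by norm_num) (k+1)]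
        calc (k : ℝ) * ((3:ℝ)^(k-1) * (N:ℝ)^(k-1) * (3 * Real.sqrt N))
            = ((k : ℝ) * (3 ^ (k-1) * 3)) * ((N:ℝ)^(k-1) * Real.sqrt N) := by ring
          _ ≤ (((k : ℝ) + 1) * 3 ^ (k + 1)) * ((N:ℝ)^(k-1) * Real.sqrt N) := by
              have : (0:ℝ) ≤ (N:ℝ)^(k-1) * Real.sqrt N := by positivity
              exact mul_le_mul_of_nonneg_right hcoef this
          _ = ((k : ℝ) + 1) * 3 ^ (k + 1) * ((N:ℝ)^(k-1) * Real.sqrt N) := by ring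

open scoped Classical in
lemma part1_bound' (k N : ℕ) (hN : 1 ≤ N) :
    ((((Finset.Icc (-(N : ℤ)) N).powersetCard k).filter ContainsSquareModAEPrime).card : ℝ)
      ≤ ((k : ℝ) + 1) * 3 ^ (k + 1) * (N : ℝ) ^ ((k : ℝ) - 1/2) := by
  rcases Nat.eq_zero_or_pos k with rfl | hk
  · have h := card_filter_master 0 N
    rw [show Finset.Icc 1 0 = (∅ : Finset ℕ) from Finset.Icc_eq_empty (by omega),
      Finset.sum_empty, Nat.le_zero] at h
    rw [h]
    have hNpos : (0 : ℝ) < N := by exact_mod_cast Nat.pos_of_ne_zero (by omega)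
    push_cast
    positivity
  · exact part1_bound k N hk hN

open Filter in
open scoped Classical in
/-- There is a constant `a > 0` such that the number of `k`-element subsets of
`[-N, N] ∩ ℤ` that contain a square modulo all but finitely many primes is at most
`a · N^(k - 1/2)`; consequently, the additive subset density of such subsets is zero. -/
theorem square_case_subset_density_zero (k : ℕ) :
    ∃ a : ℝ, 0 < a ∧
      (∀ N : ℕ, 1 ≤ N →
        ((((Finset.Icc (-(N : ℤ)) (N : ℤ)).powersetCard k).filter
            ContainsSquareModAEPrime).card : ℝ)
          ≤ a * (N : ℝ) ^ ((k : ℝ) - 1 / 2)) ∧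
      Tendsto
        (fun N : ℕ =>
          ((((Finset.Icc (-(N : ℤ)) (N : ℤ)).powersetCard k).filter
              ContainsSquareModAEPrime).card : ℝ) / (2 * N + 1).choose k)
        atTop (nhds 0) := by
  refine ⟨((k : ℝ) + 1) * 3 ^ (k + 1), by positivity, fun N hN => part1_bound' k N hN, ?_⟩
  set a : ℝ := ((k : ℝ) + 1) * 3 ^ (k + 1) with ha
  have hapos : (0 : ℝ) < a := by rw [ha]; positivity
  have hmain : Tendsto (fun N : ℕ => (a * k.factorial) * (N : ℝ) ^ (-(1/2) : ℝ))
      atTop (nhds 0) := by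
    have h1 : Tendsto (fun N : ℕ => (N : ℝ) ^ (-(1/2) : ℝ)) atTop (nhds 0) :=
      (tendsto_rpow_neg_atTop (by norm_num)).comp tendsto_natCast_atTop_atTop
    have h2 := h1.const_mul (a * k.factorial)
    simpa using h2
  refine tendsto_of_tendsto_of_tendsto_of_le_of_le' tendsto_const_nhds hmain ?_ ?_
  · refine Filter.Eventually.of_forall fun N => ?_
    positivity
  · rw [Filter.eventually_atTop]
    refine ⟨k + 1, fun N hN => ?_⟩
    have hN1 : 1 ≤ N := by omega
    have hNpos : (0 : ℝ) < N := by exact_mod_cast Nat.pos_of_ne_zero (by omega)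
    have hchoosenat : N ^ k ≤ k.factorial * (2*N+1).choose k := by
      calc N ^ k ≤ (2*N+1+1-k) ^ k := Nat.pow_le_pow_left (by omega) k
        _ ≤ (2*N+1).descFactorial k := Nat.pow_sub_le_descFactorial (2*N+1) k
        _ = k.factorial * (2*N+1).choose k := Nat.descFactorial_eq_factorial_mul_choose _ _
    have hchoose : (N : ℝ)^k / k.factorial ≤ ((2*N+1).choose k : ℝ) := by
      rw [div_le_iff₀ (by positivity)]
      calc (N : ℝ)^k ≤ ((k.factorial * (2*N+1).choose k : ℕ) : ℝ) := by exact_mod_cast hchoosenat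
        _ = ((2*N+1).choose k : ℝ) * k.factorial := by push_cast; ring
    have hdpos : (0 : ℝ) < (N : ℝ)^k / k.factorial := by positivity
    have hcount := part1_bound' k N hN1
    have hle : ((((Finset.Icc (-(N : ℤ)) (N : ℤ)).powersetCard k).filter
          ContainsSquareModAEPrime).card : ℝ) / ((2 * N + 1).choose k : ℝ)
        ≤ (a * (N : ℝ) ^ ((k : ℝ) - 1/2)) / ((N : ℝ)^k / k.factorial) :=
      div_le_div₀ (by positivity) hcount hdpos hchoose
    have hXY : (N : ℝ) ^ ((k : ℝ) - 1/2) / (N : ℝ)^k = (N : ℝ) ^ (-(1/2) : ℝ) := by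
      rw [← Real.rpow_natCast (N : ℝ) k, ← Real.rpow_sub hNpos]
      norm_num
    have hRHS : (a * (N : ℝ) ^ ((k : ℝ) - 1/2)) / ((N : ℝ)^k / k.factorial)
        = (a * k.factorial) * (N : ℝ) ^ (-(1/2) : ℝ) := by
      rw [div_div_eq_mul_div]
      rw [show a * (N : ℝ) ^ ((k : ℝ) - 1/2) * (k.factorial : ℝ)
        = (a * k.factorial) * (N : ℝ) ^ ((k : ℝ) - 1/2) by ring]
      rw [mul_div_assoc, hXY]
    exact hle.trans_eq hRHS
end

section
/- Let q be an odd prime and p₁, p₂ distinct primes different from q. Then the set B = {p₁} ∪ {p₁^j · p₂ : j = 0, 1, ..., q−1}, of cardinality q+1, contains a q-th power modulo all but a density-zero set of primes, even though B contains no perfect q-th power. -/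
open Filter

/-- A set `S` of natural numbers has relative density zero in the primes. -/
def PrimesDensityZero (S : Set ℕ) : Prop :=
  Tendsto
    (fun N : ℕ =>
      ((S ∩ Set.Iic N).ncard : ℝ) / (({p : ℕ | p.Prime} ∩ Set.Iic N).ncard : ℝ))
    atTop (nhds 0)

lemma key_cyclic {q p : ℕ} (hq : q.Prime) [Fact p.Prime] (a b : (ZMod p)ˣ) :
    (∃ x : (ZMod p)ˣ, x ^ q = a) ∨ ∃ j < q, ∃ x : (ZMod p)ˣ, x ^ q = a ^ j * b := by
  haveI := Fact.mk hq
  obtain ⟨g, hg⟩ := IsCyclic.exists_generator (α := (ZMod p)ˣ)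
  obtain ⟨m, hm⟩ := (Submonoid.mem_powers_iff a g).1
    (mem_powers_iff_mem_zpowers.2 (hg a))
  by_cases hdvd : q ∣ m
  · left
    obtain ⟨t, rfl⟩ := hdvd
    exact ⟨g ^ t, by rw [← pow_mul, mul_comm t q, hm]⟩
  · right
    obtain ⟨n, hn⟩ := (Submonoid.mem_powers_iff b g).1
      (mem_powers_iff_mem_zpowers.2 (hg b))
    set j : ℕ := ((-(n : ZMod q)) * (m : ZMod q)⁻¹).val with hj
    refine ⟨j, ZMod.val_lt _, ?_⟩
    have hm0 : (m : ZMod q) ≠ 0 := fun h =>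
      hdvd ((ZMod.natCast_eq_zero_iff _ _).1 h)
    have hz : ((m * j + n : ℕ) : ZMod q) = 0 := by
      push_cast [hj, ZMod.natCast_val, ZMod.cast_id]
      field_simp
      ring
    obtain ⟨t, ht⟩ := (ZMod.natCast_eq_zero_iff _ _).1 hz
    refine ⟨g ^ t, ?_⟩
    rw [← pow_mul, mul_comm t q, ← ht, pow_add, pow_mul, hm, hn]

lemma coverage {q p₁ p₂ : ℕ} (hq : q.Prime) (p : ℕ) (hp : p.Prime) :
    ∃ b ∈ insert (p₁ : ℤ) ((Finset.range q).image (fun j => (p₁ : ℤ) ^ j * p₂)),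
      ∃ x : ZMod p, x ^ q = (b : ZMod p) := by
  haveI := Fact.mk hp
  have hmem₁ : (p₁ : ℤ) ∈ insert (p₁ : ℤ)
      ((Finset.range q).image (fun j => (p₁ : ℤ) ^ j * p₂)) := Finset.mem_insert_self _ _
  have hmemj : ∀ j < q, ((p₁ : ℤ) ^ j * p₂) ∈ insert (p₁ : ℤ)
      ((Finset.range q).image (fun j => (p₁ : ℤ) ^ j * p₂)) := fun j hj =>
    Finset.mem_insert_of_mem (Finset.mem_image.2 ⟨j, Finset.mem_range.2 hj, rfl⟩)
  by_cases h1 : ((p₁ : ℤ) : ZMod p) = 0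
  · exact ⟨p₁, hmem₁, 0, by rw [zero_pow hq.ne_zero, h1]⟩
  by_cases h2 : ((p₂ : ℕ) : ZMod p) = 0
  · refine ⟨(p₁ : ℤ) ^ 0 * p₂, hmemj 0 hq.pos, 0, ?_⟩
    rw [zero_pow hq.ne_zero]
    push_cast
    rw [h2, pow_zero, one_mul]
  · set a : (ZMod p)ˣ := Units.mk0 _ h1 with ha
    set b : (ZMod p)ˣ := Units.mk0 _ h2 with hb
    rcases key_cyclic hq a b with ⟨x, hx⟩ | ⟨j, hj, x, hx⟩
    · refine ⟨p₁, hmem₁, (x : ZMod p), ?_⟩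
      have := congrArg (Units.val) hx
      push_cast at this ⊢
      simpa [ha] using this
    · refine ⟨(p₁ : ℤ) ^ j * p₂, hmemj j hj, (x : ZMod p), ?_⟩
      have := congrArg (Units.val) hx
      push_cast at this ⊢
      simpa [ha, hb] using this

/-- For an odd prime `q` and distinct primes `p₁, p₂ ≠ q`, the `(q+1)`-element set
`B = {p₁} ∪ {p₁^j · p₂ : 0 ≤ j ≤ q-1}` contains a `q`-th power modulo all but a
density-zero set of primes, yet contains no perfect `q`-th power. -/
theorem exceptional_set_of_card_q_add_one
    (q p₁ p₂ : ℕ) (hq : q.Prime) (hodd : Odd q)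
    (hp₁ : p₁.Prime) (hp₂ : p₂.Prime) (hne : p₁ ≠ p₂) (h₁q : p₁ ≠ q) (h₂q : p₂ ≠ q) :
    (insert (p₁ : ℤ) ((Finset.range q).image (fun j => (p₁ : ℤ) ^ j * p₂))).card = q + 1 ∧
    PrimesDensityZero
      {p : ℕ | p.Prime ∧ ¬ ∃ b ∈
          insert (p₁ : ℤ) ((Finset.range q).image (fun j => (p₁ : ℤ) ^ j * p₂)),
        ∃ x : ZMod p, x ^ q = (b : ZMod p)} ∧
    ¬ ∃ b ∈ insert (p₁ : ℤ) ((Finset.range q).image (fun j => (p₁ : ℤ) ^ j * p₂)),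
        ∃ m : ℤ, b = m ^ q := by
  refine ⟨?_, ?_, ?_⟩
  · -- cardinality
    rw [Finset.card_insert_of_notMem, Finset.card_image_of_injOn, Finset.card_range]
    · intro i hi j hj hij
      simp only at hij
      have hij' : p₁ ^ i * p₂ = p₁ ^ j * p₂ := by exact_mod_cast hij
      have := Nat.eq_of_mul_eq_mul_right hp₂.pos hij'
      exact Nat.pow_right_injective hp₁.two_le this
    · intro hmem
      obtain ⟨j, hj, hj2⟩ := Finset.mem_image.1 hmem
      have : p₁ ^ j * p₂ = p₁ := by exact_mod_cast hj2
      have hdvd : p₂ ∣ p₁ := Dvd.intro_left _ this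
      exact hne ((Nat.prime_dvd_prime_iff_eq hp₂ hp₁).1 hdvd).symm
  · -- density: exceptional set is empty
    have hset : {p : ℕ | p.Prime ∧ ¬ ∃ b ∈
        insert (p₁ : ℤ) ((Finset.range q).image (fun j => (p₁ : ℤ) ^ j * p₂)),
        ∃ x : ZMod p, x ^ q = (b : ZMod p)} = ∅ := by
      ext p
      simp only [Set.mem_setOf_eq, Set.mem_empty_iff_false, iff_false, not_and, not_not]
      intro hp
      exact coverage hq p hp
    rw [PrimesDensityZero, hset]
    simp only [Set.empty_inter, Set.ncard_empty, Nat.cast_zero, zero_div]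
    exact tendsto_const_nhds
  · -- no perfect q-th power
    rintro ⟨b, hb, m, rfl⟩
    rcases Finset.mem_insert.1 hb with h | h
    · have h' : m.natAbs ^ q = p₁ := by
        have := congrArg Int.natAbs h
        simpa [Int.natAbs_pow, eq_comm] using this
      exact hq.one_lt.ne' ((Nat.Prime.pow_eq_iff hp₁).1 h').2
    · obtain ⟨j, hj, hj2⟩ := Finset.mem_image.1 h
      have heq : p₁ ^ j * p₂ = m.natAbs ^ q := by
        have := congrArg Int.natAbs hj2
        simpa [Int.natAbs_mul, Int.natAbs_pow] using this
      have hm0 : m.natAbs ≠ 0 := by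
        intro h0
        rw [h0, zero_pow hq.ne_zero] at heq
        exact (Nat.mul_pos (Nat.pow_pos (n := j) hp₁.pos) hp₂.pos).ne' heq
      have hfac := congrArg (fun n => n.factorization p₂) heq
      simp only [Nat.factorization_mul (pow_ne_zero j hp₁.pos.ne') hp₂.pos.ne',
        Nat.factorization_pow, Finsupp.add_apply, Finsupp.smul_apply, smul_eq_mul,
        hp₂.factorization, Finsupp.single_eq_same] at hfac
      rw [Nat.factorization_eq_zero_of_not_dvd (fun hd =>
        hne ((Nat.prime_dvd_prime_iff_eq hp₂ hp₁).1 hd).symm)] at hfac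
      simp only [mul_zero, zero_add] at hfac
      have : q ∣ 1 := hfac ▸ Dvd.intro _ rfl
      exact hq.one_lt.ne' (Nat.eq_one_of_dvd_one this)
end
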